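/- For every finite sequence of nonzero c.e. Turing degrees a_1, ..., a_k there exist c.e. sets U ⊆ V such that for every Turing degree x: there exists an x-computable set X with U ⊆ X ⊆ V if and only if a_i ≤ x for some i ∈ {1,...,k}. -/

import Mathlib

open Classical in
/-- Characteristic function of a set of naturals. -/
noncomputable def chi (A : Set ℕ) : ℕ → ℕ := fun n => if n ∈ A then 1 else 0

/-- Partial functions computable relative to an oracle `O : ℕ → ℕ`. -/
inductive RecursiveIn' (O : ℕ → ℕ) : (ℕ →. ℕ) → Prop
  | zero : RecursiveIn' O (pure 0)
  | succ : RecursiveIn' O Nat.succ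
  | left : RecursiveIn' O ↑fun n : ℕ => n.unpair.1
  | right : RecursiveIn' O ↑fun n : ℕ => n.unpair.2
  | oracle : RecursiveIn' O ↑O
  | pair {f g} : RecursiveIn' O f → RecursiveIn' O g →
      RecursiveIn' O fun n => Nat.pair <$> f n <*> g n
  | comp {f g} : RecursiveIn' O f → RecursiveIn' O g →
      RecursiveIn' O fun n => g n >>= f
  | prec {f g} : RecursiveIn' O f → RecursiveIn' O g →
      RecursiveIn' O (Nat.unpaired fun a n =>
        n.rec (f a) fun y IH => do let i ← IH; g (Nat.pair a (Nat.pair y i)))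
  | rfind {f} : RecursiveIn' O f →
      RecursiveIn' O fun a => Nat.rfind fun n => (fun m => m = 0) <$> f (Nat.pair a n)

/-- Turing reducibility between sets of naturals: `A ≤_T B`. -/
def SetTuringRed (A B : Set ℕ) : Prop := RecursiveIn' (chi B) ↑(chi A)

/-- `A` is computably enumerable. -/
def CE (A : Set ℕ) : Prop := ∃ f : ℕ →. ℕ, Nat.Partrec f ∧ ∀ n, n ∈ A ↔ (f n).Dom

/-- `A` is c.e. relative to the oracle `O`. -/
def CEIn (O : ℕ → ℕ) (A : Set ℕ) : Prop :=
  ∃ f : ℕ →. ℕ, RecursiveIn' O f ∧ ∀ n, n ∈ A ↔ (f n).Dom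

/-- A uniformly c.e. sequence of sets. -/
def UnifCE (A : ℕ → Set ℕ) : Prop :=
  ∃ f : ℕ →. ℕ, Nat.Partrec f ∧ ∀ i x, x ∈ A i ↔ (f (Nat.pair i x)).Dom

namespace RecursiveIn'

theorem of_eq {O : ℕ → ℕ} {f g : ℕ →. ℕ} (h : RecursiveIn' O f) (H : ∀ n, f n = g n) :
    RecursiveIn' O g := (funext H : f = g) ▸ h

theorem of_partrec {O : ℕ → ℕ} {f : ℕ →. ℕ} (h : Nat.Partrec f) : RecursiveIn' O f := by
  induction h with
  | zero => exact .zero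
  | succ => exact .succ
  | left => exact .left
  | right => exact .right
  | pair _ _ ihf ihg => exact .pair ihf ihg
  | comp _ _ ihf ihg => exact .comp ihf ihg
  | prec _ _ ihf ihg => exact .prec ihf ihg
  | rfind _ ih => exact .rfind ih

theorem of_computable {O : ℕ → ℕ} {f : ℕ → ℕ} (h : Computable f) : RecursiveIn' O ↑f :=
  of_partrec (Partrec.nat_iff.1 h.partrec)

theorem trans {O g : ℕ → ℕ} {f : ℕ →. ℕ} (hf : RecursiveIn' g f) (hg : RecursiveIn' O ↑g) :
    RecursiveIn' O f := by
  induction hf with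
  | zero => exact .zero
  | succ => exact .succ
  | left => exact .left
  | right => exact .right
  | oracle => exact hg
  | pair _ _ ihf ihg => exact .pair ihf ihg
  | comp _ _ ihf ihg => exact .comp ihf ihg
  | prec _ _ ihf ihg => exact .prec ihf ihg
  | rfind _ ih => exact .rfind ih

theorem map2 {O : ℕ → ℕ} {f g : ℕ → ℕ} (F : ℕ → ℕ → ℕ) (hF : Computable₂ F)
    (hf : RecursiveIn' O ↑f) (hg : RecursiveIn' O ↑g) :
    RecursiveIn' O ↑(fun n => F (f n) (g n)) := by
  have hFc : Computable fun m : ℕ => F m.unpair.1 m.unpair.2 :=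
    hF.comp (Computable.fst.comp Computable.unpair) (Computable.snd.comp Computable.unpair)
  have := RecursiveIn'.comp (f := ↑(fun m : ℕ => F m.unpair.1 m.unpair.2))
    (g := fun n => Nat.pair <$> (f n : Part ℕ) <*> (g n : Part ℕ))
    (of_computable hFc) (.pair hf hg)
  refine this.of_eq fun n => ?_
  simp [Seq.seq]
  exact Part.eq_some_iff.2 (Part.mem_bind (Part.mem_some _) (by simp [PFun.coe_val]))

theorem comp_computable {O : ℕ → ℕ} {f h : ℕ → ℕ} (hf : RecursiveIn' O ↑f) (hh : Computable h) :
    RecursiveIn' O ↑(fun n => f (h n)) := by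
  have := RecursiveIn'.comp (f := (↑f : ℕ →. ℕ)) (g := ↑h) hf (of_computable hh)
  exact this.of_eq fun n => by exact Part.eq_some_iff.2 (Part.mem_bind (Part.mem_some _) (by simp [PFun.coe_val]))

theorem comp_total {O : ℕ → ℕ} {f h : ℕ → ℕ} (hf : RecursiveIn' O ↑f) (hh : RecursiveIn' O ↑h) :
    RecursiveIn' O ↑(fun n => f (h n)) := by
  have := RecursiveIn'.comp (f := (↑f : ℕ →. ℕ)) (g := ↑h) hf hh
  exact this.of_eq fun n => by exact Part.eq_some_iff.2 (Part.mem_bind (Part.mem_some _) (by simp [PFun.coe_val]))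

theorem map1 {O : ℕ → ℕ} {f : ℕ → ℕ} (F : ℕ → ℕ) (hF : Computable F)
    (hf : RecursiveIn' O ↑f) : RecursiveIn' O ↑(fun n => F (f n)) :=
  comp_total (of_computable hF) hf

theorem oracle_comp {O : ℕ → ℕ} {g : ℕ → ℕ} (hg : Computable g) :
    RecursiveIn' O ↑(fun n => O (g n)) := comp_computable .oracle hg

theorem findNat {O : ℕ → ℕ} {f : ℕ → ℕ} (hf : RecursiveIn' O ↑f)
    (hex : ∀ a, ∃ n, f (Nat.pair a n) = 0) :
    RecursiveIn' O ↑(fun a => Nat.find (hex a)) := by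
  have := RecursiveIn'.rfind hf
  refine this.of_eq fun a => ?_
  apply Part.eq_some_iff.2
  have hspec : f (Nat.pair a (Nat.find (hex a))) = 0 := Nat.find_spec (hex a)
  have hmin : ∀ m < Nat.find (hex a), ¬ f (Nat.pair a m) = 0 := fun m hm => Nat.find_min (hex a) hm
  refine Nat.mem_rfind.2 ⟨?_, ?_⟩
  · simp [hspec]
  · intro m hm
    simp [hmin m hm]

def bmax (f : ℕ → ℕ) : ℕ → ℕ
  | 0 => f 0
  | n + 1 => max (bmax f n) (f (n + 1))

theorem bmax_le {f : ℕ → ℕ} {p n : ℕ} (h : p ≤ n) : f p ≤ bmax f n := by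
  induction n with
  | zero => simp_all [bmax, Nat.le_zero.1 h]
  | succ n ih =>
    rcases Nat.lt_or_ge p (n+1) with h'|h'
    · exact le_trans (ih (Nat.lt_succ_iff.1 h')) (le_max_left _ _)
    · have : p = n + 1 := le_antisymm h h'
      subst this; exact le_max_right _ _

theorem bmaxRec {O : ℕ → ℕ} {f : ℕ → ℕ} (hf : RecursiveIn' O ↑f) :
    RecursiveIn' O ↑(bmax f) := by
  set g : ℕ → ℕ := fun z : ℕ => max z.unpair.2.unpair.2 (f (z.unpair.2.unpair.1 + 1)) with hgdef
  have hg : RecursiveIn' O ↑g := by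
    have h1 : RecursiveIn' O ↑(fun z : ℕ => z.unpair.2.unpair.2) :=
      RecursiveIn'.of_computable
        ((Computable.snd.comp Computable.unpair).comp ((Computable.snd.comp Computable.unpair)))
    have h2 : RecursiveIn' O ↑(fun z : ℕ => f (z.unpair.2.unpair.1 + 1)) :=
      hf.comp_computable
        (Computable.succ.comp ((Computable.fst.comp Computable.unpair).comp
          (Computable.snd.comp Computable.unpair)))
    exact RecursiveIn'.map2 max Primrec.nat_max.to_comp h1 h2
  have hbase : RecursiveIn' O ↑(fun _ : ℕ => f 0) :=
    hf.comp_computable (Computable.const 0)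
  have hp := RecursiveIn'.prec hbase hg
  have key : ∀ a n : ℕ, (Nat.rec (motive := fun _ => Part ℕ) ((↑(fun _ : ℕ => f 0) : ℕ →. ℕ) a)
      (fun y IH => IH >>= fun i => (↑g : ℕ →. ℕ) (Nat.pair a (Nat.pair y i))) n)
      = Part.some (bmax f n) := by
    intro a n; induction n with
    | zero => rfl
    | succ n ih => simp [bmax, hgdef] at ih ⊢; rw [ih]; simp
  have hp' : RecursiveIn' O ↑(fun m : ℕ => bmax f m.unpair.2) := by
    refine hp.of_eq fun m => ?_
    simpa only [Nat.unpaired, PFun.coe_val] using key m.unpair.1 m.unpair.2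
  have := hp'.comp_computable (f := fun m : ℕ => bmax f m.unpair.2)
    (Primrec₂.natPair.to_comp.comp (Computable.const 0) Computable.id)
  exact this.of_eq fun n => by simp

end RecursiveIn'

theorem chi_eq_one {A : Set ℕ} {x : ℕ} : chi A x = 1 ↔ x ∈ A := by
  by_cases h : x ∈ A <;> simp [chi, h]

theorem chi_eq_zero {A : Set ℕ} {x : ℕ} : chi A x = 0 ↔ x ∉ A := by
  by_cases h : x ∈ A <;> simp [chi, h]

theorem setRed_trans {A X Y : Set ℕ} (h1 : SetTuringRed A X) (h2 : SetTuringRed X Y) :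
    SetTuringRed A Y := RecursiveIn'.trans h1 h2

structure Enum (A : Set ℕ) : Type where
  W : ℕ → ℕ → Bool
  comp : Computable₂ W
  mono : ∀ {s s' x}, s ≤ s' → W s x = true → W s' x = true
  mem : ∀ x, x ∈ A ↔ ∃ s, W s x = true

noncomputable def enumOfCE {A : Set ℕ} (h : CE A) : Enum A := by
  choose f hf hmem using h
  choose c hc using Nat.Partrec.Code.exists_code.1 hf
  refine ⟨fun s x => (Nat.Partrec.Code.evaln s c x).isSome, ?_, ?_, ?_⟩
  · have : Primrec fun p : ℕ × ℕ => (Nat.Partrec.Code.evaln p.1 c p.2).isSome :=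
      Primrec.option_isSome.comp
        (Nat.Partrec.Code.primrec_evaln.comp ((Primrec.fst.pair (Primrec.const c)).pair Primrec.snd))
    exact Primrec₂.to_comp this
  · intro s s' x hss h1
    rcases Option.isSome_iff_exists.1 h1 with ⟨y, hy⟩
    exact Option.isSome_iff_exists.2 ⟨y, Nat.Partrec.Code.evaln_mono hss hy⟩
  · intro x
    rw [hmem x, ← hc, Part.dom_iff_mem]
    constructor
    · rintro ⟨y, hy⟩
      rcases Nat.Partrec.Code.evaln_complete.1 hy with ⟨s, hs⟩
      exact ⟨s, Option.isSome_iff_exists.2 ⟨y, hs⟩⟩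
    · rintro ⟨s, hs⟩
      rcases Option.isSome_iff_exists.1 hs with ⟨y, hy⟩
      exact ⟨y, Nat.Partrec.Code.evaln_complete.2 ⟨s, hy⟩⟩

theorem ce_of_W {W : ℕ → ℕ → Bool} (hW : Computable₂ W) :
    CE {x | ∃ s, W s x = true} := by
  refine ⟨fun x => Nat.rfind (fun s => Part.some (W s x)), ?_, ?_⟩
  · have : Partrec fun x => Nat.rfind (fun s => Part.some (W s x)) := by
      apply Partrec.rfind
      exact Partrec.some.comp (hW.comp Computable.snd Computable.fst)
    exact Partrec.nat_iff.1 this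
  · intro n
    simp only [Set.mem_setOf_eq]
    refine Iff.trans ?_ (Nat.rfind_dom (p := fun s => Part.some (W s n))).symm
    constructor
    · rintro ⟨s, hs⟩
      exact ⟨s, by simpa using hs, fun {m} _ => trivial⟩
    · rintro ⟨s, hs, _⟩; exact ⟨s, by simpa using hs⟩

def bOr (g : ℕ → Bool) : ℕ → Bool
  | 0 => g 0
  | t + 1 => bOr g t || g (t + 1)

theorem bOr_iff {g : ℕ → Bool} {t : ℕ} : bOr g t = true ↔ ∃ p, p ≤ t ∧ g p = true := by
  induction t with
  | zero => simp [bOr]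
  | succ t ih =>
    simp only [bOr, Bool.or_eq_true, ih]
    constructor
    · rintro (⟨p, hp, h⟩ | h)
      · exact ⟨p, le_trans hp (Nat.le_succ t), h⟩
      · exact ⟨t + 1, le_refl _, h⟩
    · rintro ⟨p, hp, h⟩
      rcases Nat.lt_or_ge p (t + 1) with h' | h'
      · exact Or.inl ⟨p, Nat.lt_succ_iff.1 h', h⟩
      · right; rwa [le_antisymm hp h'] at h

theorem bOr_monoG {g g' : ℕ → Bool} {t : ℕ} (h : ∀ p, g p = true → g' p = true)
    (hb : bOr g t = true) : bOr g' t = true := by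
  rcases bOr_iff.1 hb with ⟨p, hp, hg⟩
  exact bOr_iff.2 ⟨p, hp, h p hg⟩

theorem primrec_bOr {α : Type} [Primcodable α] {g : α → ℕ → Bool} (hg : Primrec₂ g) :
    Primrec₂ fun a t => bOr (g a) t := by
  have h := Primrec.nat_rec (f := fun a : α => g a 0)
    (g := fun (a : α) (p : ℕ × Bool) => p.2 || g a (p.1 + 1))
    (hg.comp Primrec.id (Primrec.const 0))
    (Primrec.or.comp (Primrec.snd.comp Primrec.snd)
      (hg.comp Primrec.fst (Primrec.succ.comp (Primrec.fst.comp Primrec.snd))))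
  refine h.of_eq ?_
  intro a t
  induction t with
  | zero => rfl
  | succ t ih => simp [bOr, ← ih]

theorem oracleFind {O : ℕ → ℕ} {G : ℕ → ℕ → Bool} {e : ℕ → ℕ}
    (hG : Computable₂ G) (he : Computable e)
    (hex : ∀ a, ∃ n, G (Nat.pair a n) (O (e (Nat.pair a n))) = true) :
    ∃ h : ℕ → ℕ, RecursiveIn' O ↑h ∧
      ∀ a, G (Nat.pair a (h a)) (O (e (Nat.pair a (h a)))) = true := by
  set f0 : ℕ → ℕ := fun m => cond (G m (O (e m))) 0 1 with hf0
  have hf : RecursiveIn' O ↑f0 := by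
    have hF : Computable₂ fun (m b : ℕ) => cond (G m b) 0 1 :=
      Computable.cond (hG.comp Computable.fst Computable.snd)
        (Computable.const 0) (Computable.const 1)
    have h2 := RecursiveIn'.map2 (O := O) (f := fun n : ℕ => n) (g := fun n => O (e n))
      (fun m b => cond (G m b) 0 1) hF (RecursiveIn'.of_computable Computable.id)
      (RecursiveIn'.oracle_comp he)
    exact h2
  have hex' : ∀ a, ∃ n, f0 (Nat.pair a n) = 0 := by
    intro a
    rcases hex a with ⟨n, hn⟩
    exact ⟨n, by simp [hf0, hn]⟩
  refine ⟨fun a => Nat.find (hex' a), RecursiveIn'.findNat hf hex', fun a => ?_⟩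
  have hs := Nat.find_spec (hex' a)
  revert hs
  simp only [hf0]
  cases hGa : G (Nat.pair a (Nat.find (hex' a))) (O (e (Nat.pair a (Nat.find (hex' a))))) <;>
    simp [hGa]

theorem coverStage {V : Set ℕ} (E : Enum V) (t : ℕ) :
    ∃ u, ∀ p ≤ t, p ∈ V → E.W u p = true := by
  induction t with
  | zero =>
    by_cases h : (0 : ℕ) ∈ V
    · rcases (E.mem 0).1 h with ⟨u, hu⟩
      exact ⟨u, fun p hp _ => by rw [Nat.le_zero.1 hp]; exact hu⟩
    · exact ⟨0, fun p hp hpV => absurd (Nat.le_zero.1 hp ▸ hpV) h⟩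
  | succ t ih =>
    rcases ih with ⟨u, hu⟩
    by_cases h : (t + 1 : ℕ) ∈ V
    · rcases (E.mem (t + 1)).1 h with ⟨u', hu'⟩
      refine ⟨max u u', fun p hp hpV => ?_⟩
      rcases Nat.lt_or_ge p (t + 1) with h' | h'
      · exact E.mono (le_max_left u u') (hu p (Nat.lt_succ_iff.1 h') hpV)
      · rw [le_antisymm hp h']; exact E.mono (le_max_right u u') hu'
    · refine ⟨u, fun p hp hpV => ?_⟩
      rcases Nat.lt_or_ge p (t + 1) with h' | h'
      · exact hu p (Nat.lt_succ_iff.1 h') hpV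
      · exact absurd (le_antisymm hp h' ▸ hpV) h

theorem computable_bOr {α : Type} [Primcodable α] {g : α → ℕ → Bool} (hg : Computable₂ g) :
    Computable₂ fun a t => bOr (g a) t := by
  have h := Computable.nat_rec (f := fun p : α × ℕ => p.2) (g := fun p : α × ℕ => g p.1 0)
    (h := fun (p : α × ℕ) (q : ℕ × Bool) => q.2 || g p.1 (q.1 + 1))
    Computable.snd (hg.comp Computable.fst (Computable.const 0))
    (Primrec.or.to_comp.comp (Computable.snd.comp Computable.snd)
      (hg.comp (Computable.fst.comp Computable.fst)
        (Computable.succ.comp (Computable.fst.comp Computable.snd))))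
  refine h.of_eq ?_
  rintro ⟨a, t⟩
  induction t with
  | zero => rfl
  | succ t ih => simp [bOr, ← ih]

theorem cu1 : Computable fun n : ℕ => n.unpair.1 := Computable.fst.comp Computable.unpair
theorem cu2 : Computable fun n : ℕ => n.unpair.2 := Computable.snd.comp Computable.unpair

def Good (L : List (Set ℕ)) : Prop :=
  ∃ (U V : Set ℕ) (EU : Enum U) (EV : Enum V), U ⊆ V ∧
    (∀ A ∈ L, ∃ g : ℕ → ℕ, RecursiveIn' (chi A) ↑g ∧ ∀ q ∈ U, EV.W (g q) q = true) ∧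
    (∀ X : Set ℕ, U ⊆ X → X ⊆ V → ∃ A ∈ L, RecursiveIn' (chi X) ↑(chi A))

theorem good_single {A : Set ℕ} (hce : CE A) : Good [A] := by
  have E := enumOfCE hce
  refine ⟨A, A, E, E, subset_rfl, ?_, ?_⟩
  · intro A' hA'
    rcases List.mem_singleton.1 hA' with rfl
    have hG : Computable₂ fun (m b : ℕ) => (E.W m.unpair.2 m.unpair.1 || (b == 0)) := by
      exact Primrec.or.to_comp.comp
        (E.comp.comp (cu2.comp Computable.fst) (cu1.comp Computable.fst))
        (Primrec.beq.to_comp.comp Computable.snd (Computable.const 0))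
    have he : Computable fun m : ℕ => m.unpair.1 := cu1
    have hex : ∀ a, ∃ n, (fun (m b : ℕ) => (E.W m.unpair.2 m.unpair.1 || (b == 0)))
        (Nat.pair a n) (chi A' ((fun m : ℕ => m.unpair.1) (Nat.pair a n))) = true := by
      intro a
      by_cases hA : a ∈ A'
      · rcases (E.mem a).1 hA with ⟨s, hs⟩
        exact ⟨s, by simp [hs]⟩
      · exact ⟨0, by simp [chi_eq_zero.2 hA]⟩
    obtain ⟨g, hgrec, hgspec⟩ := oracleFind hG he hex
    refine ⟨g, hgrec, fun q hq => ?_⟩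
    have := hgspec q
    simp [chi_eq_one.2 hq] at this
    simpa using this
  · intro X h1 h2
    refine ⟨A, List.mem_singleton.2 rfl, ?_⟩
    have hXA : X = A := Set.Subset.antisymm h2 h1
    rw [← hXA]
    exact RecursiveIn'.oracle

theorem good_cons {B : Set ℕ} {L' : List (Set ℕ)} (hB : CE B) (hG' : Good L') :
    Good (B :: L') := by
  obtain ⟨U', V', EU', EV', hUV', hcov', hdich'⟩ := hG'
  have E := enumOfCE hB
  -- position decoding
  set xq : ℕ → ℕ := fun q => q.unpair.1.unpair.1 with hxq
  set tq : ℕ → ℕ := fun q => q.unpair.1.unpair.2 with htq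
  set vq : ℕ → ℕ := fun q => q.unpair.2 with hvq
  set Us : ℕ → ℕ → Bool := fun s q =>
    (E.W s (xq q) && !E.W (tq q) (xq q)) &&
      bOr (fun p => EU'.W s p && !EV'.W (vq q) p) (tq q) with hUs
  set Vs : ℕ → ℕ → Bool := fun s q =>
    (E.W s (xq q) && !E.W (tq q) (xq q)) ||
      bOr (fun p => EV'.W s p && !EV'.W (vq q) p) (tq q) with hVs
  set U : Set ℕ := {q | ∃ s, Us s q = true} with hU
  set V : Set ℕ := {q | ∃ s, Vs s q = true} with hV
  -- computability of the stage predicates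
  have cxq : Computable xq := cu1.comp cu1
  have ctq : Computable tq := cu2.comp cu1
  have cvq : Computable vq := cu2
  have hUscomp : Computable₂ Us := by
    have h1 : Computable fun p : ℕ × ℕ => (E.W p.1 (xq p.2) && !E.W (tq p.2) (xq p.2)) :=
      Primrec.and.to_comp.comp
        (E.comp.comp Computable.fst (cxq.comp Computable.snd))
        (Primrec.not.to_comp.comp
          (E.comp.comp (ctq.comp Computable.snd) (cxq.comp Computable.snd)))
    have h2 : Computable₂ fun (a : ℕ × ℕ) (p : ℕ) => (EU'.W a.1 p && !EV'.W (vq a.2) p) :=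
      Primrec.and.to_comp.comp
        (EU'.comp.comp (Computable.fst.comp Computable.fst) Computable.snd)
        (Primrec.not.to_comp.comp
          (EV'.comp.comp ((cvq.comp Computable.snd).comp Computable.fst) Computable.snd))
    have h3 := computable_bOr h2
    exact Primrec.and.to_comp.comp h1 (h3.comp Computable.id (ctq.comp Computable.snd))
  have hVscomp : Computable₂ Vs := by
    have h1 : Computable fun p : ℕ × ℕ => (E.W p.1 (xq p.2) && !E.W (tq p.2) (xq p.2)) :=
      Primrec.and.to_comp.comp
        (E.comp.comp Computable.fst (cxq.comp Computable.snd))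
        (Primrec.not.to_comp.comp
          (E.comp.comp (ctq.comp Computable.snd) (cxq.comp Computable.snd)))
    have h2 : Computable₂ fun (a : ℕ × ℕ) (p : ℕ) => (EV'.W a.1 p && !EV'.W (vq a.2) p) :=
      Primrec.and.to_comp.comp
        (EV'.comp.comp (Computable.fst.comp Computable.fst) Computable.snd)
        (Primrec.not.to_comp.comp
          (EV'.comp.comp ((cvq.comp Computable.snd).comp Computable.fst) Computable.snd))
    have h3 := computable_bOr h2
    exact Primrec.or.to_comp.comp h1 (h3.comp Computable.id (ctq.comp Computable.snd))
  -- monotonicity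
  have hUsmono : ∀ {s s' q}, s ≤ s' → Us s q = true → Us s' q = true := by
    intro s s' q hss h
    rw [hUs] at h ⊢
    simp only [Bool.and_eq_true] at h ⊢
    refine ⟨⟨E.mono hss h.1.1, h.1.2⟩, ?_⟩
    refine bOr_monoG (fun p hp => ?_) h.2
    simp only [Bool.and_eq_true] at hp ⊢
    exact ⟨EU'.mono hss hp.1, hp.2⟩
  have hVsmono : ∀ {s s' q}, s ≤ s' → Vs s q = true → Vs s' q = true := by
    intro s s' q hss h
    rw [hVs] at h ⊢
    simp only [Bool.or_eq_true] at h ⊢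
    rcases h with h | h
    · simp only [Bool.and_eq_true] at h
      exact Or.inl (by simp only [Bool.and_eq_true]; exact ⟨E.mono hss h.1, h.2⟩)
    · refine Or.inr (bOr_monoG (fun p hp => ?_) h)
      simp only [Bool.and_eq_true] at hp ⊢
      exact ⟨EV'.mono hss hp.1, hp.2⟩
  let EU : Enum U := ⟨Us, hUscomp, fun h1 h2 => hUsmono h1 h2, fun x => Iff.rfl⟩
  let EV : Enum V := ⟨Vs, hVscomp, fun h1 h2 => hVsmono h1 h2, fun x => Iff.rfl⟩
  -- membership characterizations
  have hUiff : ∀ q, q ∈ U ↔ ((xq q ∈ B ∧ E.W (tq q) (xq q) = false) ∧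
      ∃ p, p ≤ tq q ∧ p ∈ U' ∧ EV'.W (vq q) p = false) := by
    intro q
    constructor
    · rintro ⟨s, hs⟩
      rw [hUs] at hs
      simp only [Bool.and_eq_true, Bool.not_eq_true'] at hs
      obtain ⟨⟨h1, h2⟩, h3⟩ := hs
      rcases bOr_iff.1 h3 with ⟨p, hp, hgp⟩
      simp only [Bool.and_eq_true, Bool.not_eq_true'] at hgp
      exact ⟨⟨(E.mem _).2 ⟨s, h1⟩, h2⟩, p, hp, (EU'.mem _).2 ⟨s, hgp.1⟩, hgp.2⟩
    · rintro ⟨⟨hxB, hxt⟩, p, hp, hpU', hpv⟩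
      rcases (E.mem _).1 hxB with ⟨s1, hs1⟩
      rcases (EU'.mem _).1 hpU' with ⟨s2, hs2⟩
      refine ⟨max s1 s2, ?_⟩
      rw [hUs]
      simp only [Bool.and_eq_true, Bool.not_eq_true']
      refine ⟨⟨E.mono (le_max_left s1 s2) hs1, hxt⟩, bOr_iff.2 ⟨p, hp, ?_⟩⟩
      simp only [Bool.and_eq_true, Bool.not_eq_true']
      exact ⟨EU'.mono (le_max_right s1 s2) hs2, hpv⟩
  have hViff : ∀ q, q ∈ V ↔ ((xq q ∈ B ∧ E.W (tq q) (xq q) = false) ∨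
      ∃ p, p ≤ tq q ∧ p ∈ V' ∧ EV'.W (vq q) p = false) := by
    intro q
    constructor
    · rintro ⟨s, hs⟩
      rw [hVs] at hs
      simp only [Bool.or_eq_true, Bool.and_eq_true, Bool.not_eq_true'] at hs
      rcases hs with ⟨h1, h2⟩ | h3
      · exact Or.inl ⟨(E.mem _).2 ⟨s, h1⟩, h2⟩
      · rcases bOr_iff.1 h3 with ⟨p, hp, hgp⟩
        simp only [Bool.and_eq_true, Bool.not_eq_true'] at hgp
        exact Or.inr ⟨p, hp, (EV'.mem _).2 ⟨s, hgp.1⟩, hgp.2⟩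
    · rintro (⟨hxB, hxt⟩ | ⟨p, hp, hpV', hpv⟩)
      · rcases (E.mem _).1 hxB with ⟨s1, hs1⟩
        refine ⟨s1, ?_⟩
        rw [hVs]
        simp only [Bool.or_eq_true, Bool.and_eq_true, Bool.not_eq_true']
        exact Or.inl ⟨hs1, hxt⟩
      · rcases (EV'.mem _).1 hpV' with ⟨s2, hs2⟩
        refine ⟨s2, ?_⟩
        rw [hVs]
        simp only [Bool.or_eq_true, Bool.and_eq_true, Bool.not_eq_true']
        exact Or.inr (bOr_iff.2 ⟨p, hp, by
          simp only [Bool.and_eq_true, Bool.not_eq_true']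
          exact ⟨hs2, hpv⟩⟩)
  have hUV : U ⊆ V := by
    intro q hq
    rcases (hUiff q).1 hq with ⟨hleg, p, hp, hpU', hpv⟩
    exact (hViff q).2 (Or.inl hleg)
  refine ⟨U, V, EU, EV, hUV, ?_, ?_⟩
  · -- covers
    intro A hA
    rcases List.mem_cons.1 hA with rfl | hA'
    · -- head set B (renamed A)
      have hG : Computable₂ fun (m b : ℕ) => (E.W m.unpair.2 (xq m.unpair.1) || (b == 0)) := by
        exact Primrec.or.to_comp.comp
          (E.comp.comp (cu2.comp Computable.fst) ((cxq.comp cu1).comp Computable.fst))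
          (Primrec.beq.to_comp.comp Computable.snd (Computable.const 0))
      have he : Computable fun m : ℕ => xq m.unpair.1 := cxq.comp cu1
      have hex : ∀ a, ∃ n, (fun (m b : ℕ) => (E.W m.unpair.2 (xq m.unpair.1) || (b == 0)))
          (Nat.pair a n) (chi A ((fun m : ℕ => xq m.unpair.1) (Nat.pair a n))) = true := by
        intro a
        by_cases hxA : xq a ∈ A
        · rcases (E.mem _).1 hxA with ⟨s, hs⟩
          exact ⟨s, by simp [hs]⟩
        · exact ⟨0, by simp [chi_eq_zero.2 hxA]⟩
      obtain ⟨g, hgrec, hgspec⟩ := oracleFind hG he hex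
      refine ⟨g, hgrec, fun q hq => ?_⟩
      rcases (hUiff q).1 hq with ⟨⟨hxB, hxt⟩, _⟩
      have := hgspec q
      simp [chi_eq_one.2 hxB] at this
      show Vs (g q) q = true
      rw [hVs]
      simp only [Bool.or_eq_true, Bool.and_eq_true, Bool.not_eq_true']
      exact Or.inl ⟨by simpa using this, hxt⟩
    · -- tail set A ∈ L'
      obtain ⟨g', hg'rec, hg'spec⟩ := hcov' A hA'
      refine ⟨fun q => RecursiveIn'.bmax g' (tq q), (RecursiveIn'.bmaxRec hg'rec).comp_computable ctq, fun q hq => ?_⟩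
      rcases (hUiff q).1 hq with ⟨_, p, hp, hpU', hpv⟩
      show Vs (RecursiveIn'.bmax g' (tq q)) q = true
      rw [hVs]
      simp only [Bool.or_eq_true]
      refine Or.inr (bOr_iff.2 ⟨p, hp, ?_⟩)
      simp only [Bool.and_eq_true, Bool.not_eq_true']
      exact ⟨EV'.mono (RecursiveIn'.bmax_le hp) (hg'spec p hpU'), hpv⟩
  · -- dichotomy
    intro X hUX hXV
    by_cases hP : ∀ n, ∃ x t v s : ℕ, n < t ∧ E.W s x = true ∧ E.W t x = false ∧
        Nat.pair (Nat.pair x t) v ∉ X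
    · -- Case B : X computes a member of the inner interval
      have hG : Computable₂ fun (m b : ℕ) =>
          (decide (m.unpair.1 < m.unpair.2.unpair.1.unpair.2) &&
           E.W m.unpair.2.unpair.2.unpair.2 m.unpair.2.unpair.1.unpair.1 &&
           !E.W m.unpair.2.unpair.1.unpair.2 m.unpair.2.unpair.1.unpair.1 &&
           (b == 0)) := by
        have c1 : Computable fun p : ℕ × ℕ => p.1.unpair.1 := cu1.comp Computable.fst
        have c2 : Computable fun p : ℕ × ℕ => p.1.unpair.2.unpair.1.unpair.2 :=
          ((cu2.comp cu1).comp cu2).comp Computable.fst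
        have c3 : Computable fun p : ℕ × ℕ => p.1.unpair.2.unpair.2.unpair.2 :=
          ((cu2.comp cu2).comp cu2).comp Computable.fst
        have c4 : Computable fun p : ℕ × ℕ => p.1.unpair.2.unpair.1.unpair.1 :=
          ((cu1.comp cu1).comp cu2).comp Computable.fst
        exact Primrec.and.to_comp.comp
          (Primrec.and.to_comp.comp
            (Primrec.and.to_comp.comp
              (Primrec.nat_lt.decide.to_comp.comp c1 c2)
              (E.comp.comp c3 c4))
            (Primrec.not.to_comp.comp (E.comp.comp c2 c4)))
          (Primrec.beq.to_comp.comp Computable.snd (Computable.const 0))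
      have he : Computable fun m : ℕ =>
          Nat.pair m.unpair.2.unpair.1 m.unpair.2.unpair.2.unpair.1 :=
        Primrec₂.natPair.to_comp.comp (cu1.comp cu2) ((cu1.comp cu2).comp cu2)
      have hex : ∀ a, ∃ n, (fun (m b : ℕ) =>
          (decide (m.unpair.1 < m.unpair.2.unpair.1.unpair.2) &&
           E.W m.unpair.2.unpair.2.unpair.2 m.unpair.2.unpair.1.unpair.1 &&
           !E.W m.unpair.2.unpair.1.unpair.2 m.unpair.2.unpair.1.unpair.1 &&
           (b == 0))) (Nat.pair a n)
          (chi X ((fun m : ℕ => Nat.pair m.unpair.2.unpair.1 m.unpair.2.unpair.2.unpair.1)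
            (Nat.pair a n))) = true := by
        intro a
        rcases hP a with ⟨x, t, v, s, h1, h2, h3, h4⟩
        refine ⟨Nat.pair (Nat.pair x t) (Nat.pair v s), ?_⟩
        simp [Nat.unpair_pair, h1, h2, h3, chi_eq_zero.2 h4]
      obtain ⟨h, hhrec, hhspec⟩ := oracleFind hG he hex
      set X' : Set ℕ := {p | EV'.W ((h p).unpair.2.unpair.1) p = true} with hX'
      have hU'X' : U' ⊆ X' := by
        intro p hp
        have hs := hhspec p
        simp only [Nat.unpair_pair, Bool.and_eq_true, Bool.not_eq_true', decide_eq_true_eq,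
          beq_iff_eq] at hs
        obtain ⟨⟨⟨hlt, hWs⟩, hWt⟩, hchi⟩ := hs
        have hqX : Nat.pair ((h p).unpair.1) ((h p).unpair.2.unpair.1) ∉ X :=
          chi_eq_zero.1 hchi
        have hqU : Nat.pair ((h p).unpair.1) ((h p).unpair.2.unpair.1) ∉ U :=
          fun hc => hqX (hUX hc)
        rw [hUiff] at hqU
        simp only [hxq, htq, hvq, Nat.unpair_pair, not_and, not_exists] at hqU
        have hleg1 : (h p).unpair.1.unpair.1 ∈ B := (E.mem _).2 ⟨_, hWs⟩
        have h5 := hqU ⟨hleg1, hWt⟩ p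
        have h6 := h5 (le_of_lt hlt) hp
        show EV'.W ((h p).unpair.2.unpair.1) p = true
        cases hEV : EV'.W ((h p).unpair.2.unpair.1) p with
        | false => exact absurd hEV h6
        | true => rfl
      have hX'V' : X' ⊆ V' := fun p hp => (EV'.mem p).2 ⟨_, hp⟩
      have hchiX' : RecursiveIn' (chi X) ↑(chi X') := by
        have hF : Computable₂ fun (p c : ℕ) => (cond (EV'.W c.unpair.2.unpair.1 p) 1 0 : ℕ) :=
          Computable.cond
            (EV'.comp.comp ((cu1.comp cu2).comp Computable.snd) Computable.fst)
            (Computable.const 1) (Computable.const 0)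
        have hm := RecursiveIn'.map2 (O := chi X) (f := fun p : ℕ => p) (g := h)
          _ hF (RecursiveIn'.of_computable Computable.id) hhrec
        refine hm.of_eq fun p => ?_
        show Part.some _ = Part.some (chi X' p)
        congr 1
        by_cases hmem : EV'.W ((h p).unpair.2.unpair.1) p = true
        · have : p ∈ X' := hmem
          simp [hmem, chi, this]
        · have hff : EV'.W ((h p).unpair.2.unpair.1) p = false := by
            cases hEV : EV'.W ((h p).unpair.2.unpair.1) p with
            | false => rfl
            | true => exact absurd hEV hmem
          have : p ∉ X' := fun hc => hmem hc
          simp [hff, chi, this]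
      obtain ⟨A, hAL', hred⟩ := hdich' X' hU'X' hX'V'
      exact ⟨A, List.mem_cons_of_mem _ hAL', RecursiveIn'.trans hred hchiX'⟩
    · -- Case A : X computes B
      have hn : ∃ n₀ : ℕ, ∀ x t v s : ℕ, n₀ < t → E.W s x = true → E.W t x = false →
          Nat.pair (Nat.pair x t) v ∈ X := by
        obtain ⟨n₀, hn₀⟩ := not_forall.1 hP
        refine ⟨n₀, fun x t v s h1 h2 h3 => ?_⟩
        by_contra hq
        exact hn₀ ⟨x, t, v, s, h1, h2, h3, hq⟩
      obtain ⟨n₀, hn₀⟩ := hn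
      obtain ⟨vbar, hvbar⟩ := coverStage EV' (n₀ + 1)
      have hG : Computable₂ fun (m b : ℕ) => (E.W m.unpair.2 m.unpair.1 || (b == 0)) :=
        Primrec.or.to_comp.comp
          (E.comp.comp (cu2.comp Computable.fst) (cu1.comp Computable.fst))
          (Primrec.beq.to_comp.comp Computable.snd (Computable.const 0))
      have he : Computable fun m : ℕ => Nat.pair (Nat.pair m.unpair.1 (n₀ + 1)) vbar :=
        Primrec₂.natPair.to_comp.comp
          (Primrec₂.natPair.to_comp.comp cu1 (Computable.const (n₀ + 1)))
          (Computable.const vbar)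
      have hex : ∀ a, ∃ n, (fun (m b : ℕ) => (E.W m.unpair.2 m.unpair.1 || (b == 0)))
          (Nat.pair a n)
          (chi X ((fun m : ℕ => Nat.pair (Nat.pair m.unpair.1 (n₀ + 1)) vbar)
            (Nat.pair a n))) = true := by
        intro a
        by_cases haB : a ∈ B
        · rcases (E.mem a).1 haB with ⟨s, hs⟩
          exact ⟨s, by simp [Nat.unpair_pair, hs]⟩
        · refine ⟨0, ?_⟩
          have hqV : Nat.pair (Nat.pair a (n₀ + 1)) vbar ∉ V := by
            rw [hViff]
            simp only [hxq, htq, hvq, Nat.unpair_pair]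
            rintro (⟨hc, _⟩ | ⟨p, hp, hpV', hpf⟩)
            · exact haB hc
            · rw [hvbar p hp hpV'] at hpf; exact Bool.true_eq_false.mp hpf
          have hqX : Nat.pair (Nat.pair a (n₀ + 1)) vbar ∉ X := fun hc => hqV (hXV hc)
          simp [Nat.unpair_pair, chi_eq_zero.2 hqX]
      obtain ⟨h, hhrec, hhspec⟩ := oracleFind hG he hex
      refine ⟨B, List.mem_cons_self, ?_⟩
      have hF : Computable₂ fun (a c : ℕ) =>
          (cond (E.W c a) 1 (cond (E.W (n₀ + 1) a) 1 0) : ℕ) :=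
        Computable.cond (E.comp.comp Computable.snd Computable.fst) (Computable.const 1)
          (Computable.cond (E.comp.comp (Computable.const (n₀ + 1)) Computable.fst)
            (Computable.const 1) (Computable.const 0))
      have hm := RecursiveIn'.map2 (O := chi X) (f := fun a : ℕ => a) (g := h)
        _ hF (RecursiveIn'.of_computable Computable.id) hhrec
      refine hm.of_eq fun a => ?_
      show Part.some _ = Part.some (chi B a)
      congr 1
      have hs := hhspec a
      simp only [Nat.unpair_pair, Bool.or_eq_true, beq_iff_eq] at hs
      by_cases h1 : E.W (h a) a = true
      · have haB : a ∈ B := (E.mem a).2 ⟨_, h1⟩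
        simp [h1, chi_eq_one.2 haB]
      · have h1f : E.W (h a) a = false := by
          cases hE : E.W (h a) a with
          | false => rfl
          | true => exact absurd hE h1
        have hchi0 : chi X (Nat.pair (Nat.pair a (n₀ + 1)) vbar) = 0 := by
          rcases hs with hs | hs
          · exact absurd hs h1
          · exact hs
        have hqX : Nat.pair (Nat.pair a (n₀ + 1)) vbar ∉ X := chi_eq_zero.1 hchi0
        by_cases h2 : E.W (n₀ + 1) a = true
        · have haB : a ∈ B := (E.mem a).2 ⟨_, h2⟩
          simp [h1f, h2, chi_eq_one.2 haB]
        · have h2f : E.W (n₀ + 1) a = false := by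
            cases hE : E.W (n₀ + 1) a with
            | false => rfl
            | true => exact absurd hE h2
          have haB : a ∉ B := by
            intro haB
            rcases (E.mem a).1 haB with ⟨s', hs'⟩
            exact hqX (hn₀ a (n₀ + 1) vbar s' (Nat.lt_succ_self n₀) hs' h2f)
          simp [h1f, h2f, chi_eq_zero.2 haB]

theorem goodList : ∀ L : List (Set ℕ), L ≠ [] → (∀ A ∈ L, CE A) → Good L := by
  intro L
  induction L with
  | nil => intro h; exact absurd rfl h
  | cons B L' ih =>
    intro _ hce
    cases L' with
    | nil => exact good_single (hce B (List.mem_cons_self))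
    | cons C L'' =>
      exact good_cons (hce B (List.mem_cons_self))
        (ih (by simp) fun A hA => hce A (List.mem_cons_of_mem _ hA))

theorem stmt4 (k : ℕ) (hk : 0 < k) (A : Fin k → Set ℕ)
    (hce : ∀ i, CE (A i)) (hnz : ∀ i, ¬ComputablePred (· ∈ A i)) :
    ∃ U V : Set ℕ, CE U ∧ CE V ∧ U ⊆ V ∧
      ∀ Y : Set ℕ, (∃ X : Set ℕ, SetTuringRed X Y ∧ U ⊆ X ∧ X ⊆ V) ↔
        ∃ i, SetTuringRed (A i) Y := by
  have hLne : List.ofFn A ≠ [] := by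
    intro h
    have := List.length_ofFn (f := A)
    rw [h] at this
    simp at this
    omega
  have hceL : ∀ S ∈ List.ofFn A, CE S := by
    intro S hS
    rcases List.mem_ofFn.1 hS with ⟨i, rfl⟩
    exact hce i
  obtain ⟨U, V, EU, EV, hUV, hcov, hdich⟩ := goodList (List.ofFn A) hLne hceL
  have hCEU : CE U := by
    have h := ce_of_W EU.comp
    have hEq : {x | ∃ s, EU.W s x = true} = U := Set.ext fun x => (EU.mem x).symm
    rwa [hEq] at h
  have hCEV : CE V := by
    have h := ce_of_W EV.comp
    have hEq : {x | ∃ s, EV.W s x = true} = V := Set.ext fun x => (EV.mem x).symm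
    rwa [hEq] at h
  refine ⟨U, V, hCEU, hCEV, hUV, fun Y => ⟨?_, ?_⟩⟩
  · rintro ⟨X, hXY, hUX, hXV⟩
    obtain ⟨S, hSL, hred⟩ := hdich X hUX hXV
    rcases List.mem_ofFn.1 hSL with ⟨i, rfl⟩
    exact ⟨i, RecursiveIn'.trans hred hXY⟩
  · rintro ⟨i, hi⟩
    obtain ⟨g, hgrec, hgspec⟩ := hcov (A i) (List.mem_ofFn.2 ⟨i, rfl⟩)
    refine ⟨{q | EV.W (g q) q = true}, ?_, fun q hq => hgspec q hq,
      fun q hq => (EV.mem q).2 ⟨_, hq⟩⟩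
    have hXAi : RecursiveIn' (chi (A i)) ↑(chi {q | EV.W (g q) q = true}) := by
      have hF : Computable₂ fun (a c : ℕ) => (cond (EV.W c a) 1 0 : ℕ) :=
        Computable.cond (EV.comp.comp Computable.snd Computable.fst)
          (Computable.const 1) (Computable.const 0)
      have hm := RecursiveIn'.map2 (O := chi (A i)) (f := fun a : ℕ => a) (g := g)
        _ hF (RecursiveIn'.of_computable Computable.id) hgrec
      refine hm.of_eq fun q => ?_
      show Part.some _ = Part.some _
      congr 1
      by_cases hmem : EV.W (g q) q = true
      · have : q ∈ {q | EV.W (g q) q = true} := hmem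
        simp [hmem, chi, this]
      · have hff : EV.W (g q) q = false := by
          cases hE : EV.W (g q) q with
          | false => rfl
          | true => exact absurd hE hmem
        have : q ∉ {q | EV.W (g q) q = true} := fun hc => hmem hc
        simp [hff, chi, this]
    exact RecursiveIn'.trans hXAi hi
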